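/- Let a ≥ 0 and let G : ℝ → ℝ be nondecreasing and right-continuous with G(x) = 0 for all x < a, and suppose G is differentiable at every x > a with derivative G' log-convex on (a,∞). Let V be a nonnegative real random variable on a probability space, with P(V ≥ 1) = 1 in case a > 0, and assume E(G(xV)) < ∞ for every x ≥ a. Define H(x) = E(G(xV)) for x ≥ a and H(x) = 0 for x < a. Then H is differentiable at every x > a with H'(x) = E(V · G'(xV) · 1_{V>0}), and H' is continuous and log-convex on (a,∞). -/

import Mathlib

open MeasureTheory Set Filter Topology


/-- Midpoint log-convexity with arbitrary step size, from step size `< 1`. -/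
lemma mixAux_mid (a : ℝ) (g : ℝ → ℝ)
    (hnn : ∀ t, a < t → 0 ≤ g t)
    (hlc : ∀ x, a < x → ∀ y ∈ Ioo (0 : ℝ) 1, (g (x + y)) ^ 2 ≤ g x * g (x + 2 * y)) :
    ∀ y : ℝ, 0 < y → ∀ c : ℝ, a < c - y → g c ^ 2 ≤ g (c - y) * g (c + y) := by
  have key : ∀ n : ℕ, ∀ y : ℝ, 0 < y → y ≤ 2 ^ n * (1/2) →
      ∀ c : ℝ, a < c - y → g c ^ 2 ≤ g (c - y) * g (c + y) := by
    intro n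
    induction n with
    | zero =>
      intro y hy hy2 c hc
      have := hlc (c - y) hc y ⟨hy, by norm_num at hy2; linarith⟩
      have e1 : c - y + y = c := by ring
      have e2 : c - y + 2 * y = c + y := by ring
      rwa [e1, e2] at this
    | succ n ih =>
      intro y hy hy2 c hc
      by_cases hsmall : y ≤ 2 ^ n * (1/2)
      · exact ih y hy hsmall c hc
      · have hy2' : y / 2 ≤ 2 ^ n * (1/2) := by
          rw [pow_succ] at hy2; linarith
        have hyh : 0 < y / 2 := by linarith
        have hca : a < c := by linarith
        have A := ih (y/2) hyh hy2' c (by linarith)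
        have B := ih (y/2) hyh hy2' (c - y/2) (by rw [show c - y/2 - y/2 = c - y by ring]; linarith)
        have C := ih (y/2) hyh hy2' (c + y/2) (by rw [show c + y/2 - y/2 = c by ring]; linarith)
        rw [show c - y/2 - y/2 = c - y by ring, show c - y/2 + y/2 = c by ring] at B
        rw [show c + y/2 - y/2 = c by ring, show c + y/2 + y/2 = c + y by ring] at C
        rcases eq_or_lt_of_le (hnn c hca) with h0 | hpos
        · rw [← h0]
          have h1 := hnn (c - y) (by linarith)
          have h2 := hnn (c + y) (by linarith)
          nlinarith
        · have h1 := hnn (c - y/2) (by linarith)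
          have h2 := hnn (c + y/2) (by linarith)
          have h3 := hnn (c - y) (by linarith)
          have h4 := hnn (c + y) (by linarith)
          have hP2 : (g (c - y/2) * g (c + y/2)) ^ 2 ≤ (g (c - y) * g c) * (g c * g (c + y)) := by
            rw [mul_pow]
            exact mul_le_mul B C (sq_nonneg _) (by positivity)
          have hA2 : g c ^ 4 ≤ (g (c - y/2) * g (c + y/2)) ^ 2 := by
            nlinarith [sq_nonneg (g c)]
          have hcomb : g c ^ 4 ≤ g c ^ 2 * (g (c - y) * g (c + y)) := by nlinarith [hA2, hP2]
          have hgc2 : 0 < g c ^ 2 := by positivity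
          nlinarith [hcomb, hgc2]
  intro y hy c hc
  obtain ⟨n, hn⟩ : ∃ n : ℕ, y ≤ 2 ^ n * (1/2) := by
    obtain ⟨n, hn⟩ := pow_unbounded_of_one_lt (2 * y) (by norm_num : (1:ℝ) < 2)
    exact ⟨n, by linarith⟩
  exact key n y hy hn c hc

/-- If `g` vanishes somewhere on `(a,∞)`, it vanishes everywhere there. -/
lemma mixAux_zero (a : ℝ) (g : ℝ → ℝ)
    (hnn : ∀ t, a < t → 0 ≤ g t)
    (hmid : ∀ y : ℝ, 0 < y → ∀ c : ℝ, a < c - y → g c ^ 2 ≤ g (c - y) * g (c + y))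
    {t₀ : ℝ} (ht₀ : a < t₀) (h0 : g t₀ = 0) : ∀ t, a < t → g t = 0 := by
  -- first: zero to the right of t₀
  have hright : ∀ s, a < s → g s = 0 → ∀ t, s < t → g t = 0 := by
    intro s hs hgs t hts
    have := hmid (t - s) (by linarith) t (by linarith)
    rw [show t - (t - s) = s by ring, hgs, zero_mul] at this
    have := pow_eq_zero_iff (n := 2) (by norm_num) |>.mp (le_antisymm this (by positivity))
    exact this
  -- propagate to the left by halving distance to a
  have hstep : ∀ s, a < s → (∀ t, s < t → g t = 0) → ∀ t, a + (s - a)/2 < t → g t = 0 := by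
    intro s hs hz t ht
    rcases lt_or_ge s t with h | h
    · exact hz t h
    · have hd : 0 < (s - a)/2 := by linarith
      have h1 := hmid ((s - a)/2) hd t (by linarith)
      have h2 : g (t + (s - a)/2) = 0 := hz _ (by linarith)
      rw [h2, mul_zero] at h1
      exact pow_eq_zero_iff (n := 2) (by norm_num) |>.mp
        (le_antisymm h1 (by positivity))
  -- iterate
  have hiter : ∀ n : ℕ, ∀ t, a + (t₀ - a) / 2 ^ n < t → g t = 0 := by
    intro n
    induction n with
    | zero => intro t ht; exact hright t₀ ht₀ h0 t (by simpa using ht)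
    | succ n ih =>
      intro t ht
      have := hstep (a + (t₀ - a) / 2 ^ n)
        (by have : 0 < (t₀ - a) / 2 ^ n := div_pos (by linarith) (by positivity); linarith)
        (fun u hu => ih u hu) t ?_
      · exact this
      · have : a + (a + (t₀ - a) / 2 ^ n - a) / 2 = a + (t₀ - a) / 2 ^ (n+1) := by
          rw [pow_succ]; ring
        linarith [ht, this.ge]
  intro t ht
  obtain ⟨n, hn⟩ : ∃ n : ℕ, (t₀ - a) / 2 ^ n < t - a := by
    obtain ⟨n, hn⟩ := pow_unbounded_of_one_lt ((t₀ - a) / (t - a)) (by norm_num : (1:ℝ) < 2)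
    refine ⟨n, ?_⟩
    have h1 : t₀ - a < 2 ^ n * (t - a) := by
      have := (div_lt_iff₀ (by linarith : (0:ℝ) < t - a)).mp hn
      linarith
    rw [div_lt_iff₀ (by positivity : (0:ℝ) < 2 ^ n)]
    linarith
  exact hiter n t (by linarith)


lemma mixAux_deriv_nonneg (G : ℝ → ℝ) (hmono : Monotone G) (x : ℝ) : 0 ≤ deriv G x := by
  by_cases h : DifferentiableAt ℝ G x
  · have hd := h.hasDerivAt
    rw [hasDerivAt_iff_tendsto_slope] at hd
    refine ge_of_tendsto hd ?_
    filter_upwards [self_mem_nhdsWithin] with y hy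
    rw [slope_def_field]
    rcases lt_or_gt_of_ne (hy : y ≠ x) with h' | h'
    · exact div_nonneg_iff.mpr (Or.inr ⟨by have := hmono h'.le; linarith, by linarith⟩)
    · exact div_nonneg (by have := hmono h'.le; linarith) (by linarith)
  · rw [deriv_zero_of_not_differentiableAt h]

lemma mixAux_fatou (a : ℝ) (G : ℝ → ℝ) (hmono : Monotone G)
    (hderiv : ∀ x, a < x → DifferentiableAt ℝ G x)
    {u v : ℝ} (hau : a < u) (huv : u ≤ v) {ε : ℝ} (hε : 0 < ε) :
    ∫⁻ s in Icc u v, ENNReal.ofReal (deriv G s) ≤ ENNReal.ofReal (G (v + ε) - G u) := by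
  have hGmeas : Measurable G := hmono.measurable
  set Fn : ℕ → ℝ → ENNReal := fun n s =>
    ENNReal.ofReal ((n + 1 : ℝ) * (G (s + 1 / (n + 1)) - G s)) with hFn
  have hFnmeas : ∀ n, Measurable (Fn n) := by
    intro n
    apply Measurable.ennreal_ofReal
    exact (((hGmeas.comp (measurable_add_const _)).sub hGmeas).const_mul _)
  -- pointwise convergence on Icc u v
  have hlim : ∀ s ∈ Icc u v, Tendsto (fun n => Fn n s) atTop (𝓝 (ENNReal.ofReal (deriv G s))) := by
    intro s hs
    have hsa : a < s := lt_of_lt_of_le hau hs.1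
    have hd := (hderiv s hsa).hasDerivAt
    rw [hasDerivAt_iff_tendsto_slope] at hd
    have htends : Tendsto (fun n : ℕ => s + 1 / (n + 1 : ℝ)) atTop (𝓝[≠] s) := by
      apply tendsto_nhdsWithin_of_tendsto_nhds_of_eventually_within
      · have : Tendsto (fun n : ℕ => 1 / (n + 1 : ℝ)) atTop (𝓝 0) :=
          tendsto_one_div_add_atTop_nhds_zero_nat
        simpa using (tendsto_const_nhds.add this)
      · filter_upwards with n
        have : (0:ℝ) < 1 / (n + 1 : ℝ) := by positivity
        simp only [mem_compl_iff, mem_singleton_iff]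
        intro h
        nlinarith [h]
    have := hd.comp htends
    have heq : (fun n : ℕ => slope G s (s + 1 / (n + 1 : ℝ)))
        = fun n : ℕ => (n + 1 : ℝ) * (G (s + 1 / (n + 1)) - G s) := by
      funext n
      have hpos : (0:ℝ) < 1 / (n + 1 : ℝ) := by positivity
      rw [slope_def_field]
      field_simp
      ring
    rw [show (slope G s ∘ fun n : ℕ => s + 1 / (n + 1 : ℝ))
        = fun n : ℕ => slope G s (s + 1 / (n + 1 : ℝ)) from rfl, heq] at this
    exact (ENNReal.continuous_ofReal.tendsto _).comp this
  -- Fatou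
  have hfatou : ∫⁻ s in Icc u v, ENNReal.ofReal (deriv G s)
      ≤ liminf (fun n => ∫⁻ s in Icc u v, Fn n s) atTop := by
    have : ∫⁻ s in Icc u v, ENNReal.ofReal (deriv G s)
        = ∫⁻ s in Icc u v, liminf (fun n => Fn n s) atTop := by
      refine setLIntegral_congr_fun measurableSet_Icc ?_
      intro s hs
      exact ((hlim s hs).liminf_eq).symm
    rw [this]
    exact lintegral_liminf_le fun n => hFnmeas n
  refine hfatou.trans ?_
  -- bound the liminf
  have hGint : ∀ c d w : ℝ, IntervalIntegrable (fun s => G (s + w)) volume c d := by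
    intro c d w
    have hm : Monotone fun s => G (s + w) := fun s t hst => hmono (by linarith)
    exact (hm.monotoneOn _).intervalIntegrable
  have hbound : ∀ n : ℕ, (1 : ℝ) / (n + 1) ≤ ε →
      ∫⁻ s in Icc u v, Fn n s ≤ ENNReal.ofReal (G (v + ε) - G u) := by
    intro n hn
    set h : ℝ := 1 / (n + 1 : ℝ) with hh
    have hpos : (0:ℝ) < h := by positivity
    have hφnn : ∀ s, 0 ≤ (n + 1 : ℝ) * (G (s + h) - G s) := by
      intro s
      have := hmono (by linarith : s ≤ s + h)
      have : (0:ℝ) ≤ G (s + h) - G s := by linarith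
      positivity
    have hint : IntegrableOn (fun s => (n + 1 : ℝ) * (G (s + h) - G s)) (Icc u v) := by
      have h1 : IntervalIntegrable (fun s => (n + 1 : ℝ) * (G (s + h) - G s)) volume u v :=
        (((hGint u v h).sub (by simpa using hGint u v 0))).const_mul _
      have := h1.1
      rw [← integrableOn_Icc_iff_integrableOn_Ioc] at this
      exact this
    rw [show ∫⁻ s in Icc u v, Fn n s
        = ∫⁻ s in Icc u v, ENNReal.ofReal ((n + 1 : ℝ) * (G (s + h) - G s)) from rfl,
      ← ofReal_integral_eq_lintegral_ofReal hint (Eventually.of_forall hφnn)]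
    apply ENNReal.ofReal_le_ofReal
    -- compute the integral
    have e0 : ∫ s in Icc u v, (n + 1 : ℝ) * (G (s + h) - G s)
        = ∫ s in u..v, (n + 1 : ℝ) * (G (s + h) - G s) := by
      rw [intervalIntegral.integral_of_le huv, integral_Icc_eq_integral_Ioc]
    rw [e0, intervalIntegral.integral_const_mul]
    have e1 : ∫ s in u..v, (G (s + h) - G s)
        = (∫ s in u..v, G (s + h)) - ∫ s in u..v, G s := by
      apply intervalIntegral.integral_sub (hGint u v h) (by simpa using hGint u v 0)
    have e2 : (∫ s in u..v, G (s + h)) = ∫ s in (u+h)..(v+h), G s :=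
      intervalIntegral.integral_comp_add_right G h
    have hI : ∀ c d : ℝ, IntervalIntegrable G volume c d := fun c d => by
      simpa using hGint c d 0
    have e3 : (∫ s in (u+h)..(v+h), G s) - (∫ s in u..v, G s)
        = (∫ s in v..(v+h), G s) - ∫ s in u..(u+h), G s := by
      have c1 : (∫ s in u..(u+h), G s) + (∫ s in (u+h)..(v+h), G s) = ∫ s in u..(v+h), G s :=
        intervalIntegral.integral_add_adjacent_intervals (hI _ _) (hI _ _)
      have c2 : (∫ s in u..v, G s) + (∫ s in v..(v+h), G s) = ∫ s in u..(v+h), G s :=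
        intervalIntegral.integral_add_adjacent_intervals (hI _ _) (hI _ _)
      linarith
    have b1 : (∫ s in v..(v+h), G s) ≤ h * G (v + h) := by
      have := intervalIntegral.integral_mono_on (by linarith : v ≤ v + h) (hI v (v+h))
        (intervalIntegrable_const) (fun s hs => hmono hs.2)
      simpa using this
    have b2 : h * G u ≤ ∫ s in u..(u+h), G s := by
      have := intervalIntegral.integral_mono_on (by linarith : u ≤ u + h)
        (intervalIntegrable_const) (hI u (u+h)) (fun s hs => hmono hs.1)
      simpa using this
    have hGv : G (v + h) ≤ G (v + ε) := hmono (by linarith)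
    have hcalc : (n + 1 : ℝ) * ∫ s in u..v, (G (s + h) - G s)
        ≤ (n + 1 : ℝ) * (h * G (v + ε) - h * G u) := by
      apply mul_le_mul_of_nonneg_left _ (by positivity)
      rw [e1, e2, e3]
      have : h * G (v + h) ≤ h * G (v + ε) := by
        apply mul_le_mul_of_nonneg_left hGv hpos.le
      linarith
    have hfin : (n + 1 : ℝ) * (h * G (v + ε) - h * G u) = G (v + ε) - G u := by
      rw [hh]; field_simp
    linarith [hcalc, hfin.le, hfin.ge]
  refine liminf_le_of_frequently_le' ?_
  have : ∀ᶠ n : ℕ in atTop, (1 : ℝ) / (n + 1) ≤ ε := by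
    have : Tendsto (fun n : ℕ => 1 / (n + 1 : ℝ)) atTop (𝓝 0) :=
      tendsto_one_div_add_atTop_nhds_zero_nat
    filter_upwards [this.eventually_le_const (by linarith : (0:ℝ) < ε)] with n hn
    exact hn
  exact (this.mono fun n hn => hbound n hn).frequently

/-- `deriv G` is integrable on compact subintervals of `(a, ∞)`. -/
lemma mixAux_integrableOn (a : ℝ) (G : ℝ → ℝ) (hmono : Monotone G)
    (hderiv : ∀ x, a < x → DifferentiableAt ℝ G x)
    {u v : ℝ} (hau : a < u) (huv : u ≤ v) :
    IntegrableOn (deriv G) (Icc u v) := by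
  refine ⟨(measurable_deriv G).aestronglyMeasurable.restrict, ?_⟩
  rw [hasFiniteIntegral_iff_norm]
  have : ∀ s : ℝ, ENNReal.ofReal ‖deriv G s‖ = ENNReal.ofReal (deriv G s) := fun s => by
    rw [Real.norm_eq_abs, abs_of_nonneg (mixAux_deriv_nonneg G hmono s)]
  calc ∫⁻ s in Icc u v, ENNReal.ofReal ‖deriv G s‖
      = ∫⁻ s in Icc u v, ENNReal.ofReal (deriv G s) := by
        exact lintegral_congr fun s => this s
    _ ≤ ENNReal.ofReal (G (v + 1) - G u) := mixAux_fatou a G hmono hderiv hau huv one_pos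
    _ < ⊤ := ENNReal.ofReal_lt_top

/-- Pointwise bound for `deriv G` on a compact subinterval in terms of `G`. -/
lemma mixAux_ptbound (a : ℝ) (G : ℝ → ℝ) (hmono : Monotone G)
    (hderiv : ∀ x, a < x → DifferentiableAt ℝ G x)
    (hmid : ∀ y : ℝ, 0 < y → ∀ c : ℝ, a < c - y →
      deriv G c ^ 2 ≤ deriv G (c - y) * deriv G (c + y))
    {T₁ T₂ τ η : ℝ} (hη : 0 < η) (h1 : a < T₁ - η) (hτ1 : T₁ ≤ τ)
    (hτ2' : τ ≤ T₂) :
    deriv G τ ≤ (G (T₂ + 2 * η) - G (T₁ - η)) / (2 * η) := by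
  have hnn := mixAux_deriv_nonneg G hmono
  have hIcc : IntegrableOn (deriv G) (Icc (T₁ - η) (T₂ + η)) :=
    mixAux_integrableOn a G hmono hderiv h1 (by linarith)
  have hII : ∀ c d : ℝ, T₁ - η ≤ c → d ≤ T₂ + η → c ≤ d →
      IntervalIntegrable (deriv G) volume c d := by
    intro c d hc hd hcd
    rw [intervalIntegrable_iff_integrableOn_Ioc_of_le hcd]
    exact hIcc.mono_set (Ioc_subset_Icc_self.trans (Icc_subset_Icc hc hd))
  have hIl : IntervalIntegrable (fun y => deriv G (τ - y)) volume 0 η := by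
    have := (hII (τ - η) τ (by linarith) (by linarith) (by linarith)).comp_sub_left τ
    simpa using this.symm
  have hIr : IntervalIntegrable (fun y => deriv G (τ + y)) volume 0 η := by
    have := (hII τ (τ + η) (by linarith) (by linarith) (by linarith)).comp_add_left τ
    simpa using this
  have step1 : (2 * η) * deriv G τ ≤ ∫ y in (0:ℝ)..η, (deriv G (τ - y) + deriv G (τ + y)) := by
    have hconst : (2 * η) * deriv G τ = ∫ _y in (0:ℝ)..η, 2 * deriv G τ := by
      rw [intervalIntegral.integral_const]; simp; ring
    rw [hconst]
    apply intervalIntegral.integral_mono_on hη.le intervalIntegrable_const (hIl.add hIr)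
    intro y hy
    rcases eq_or_lt_of_le hy.1 with h0 | h0
    · rw [← h0]; simp [two_mul]
    · have hm := hmid y h0 τ (by have := hy.2; linarith)
      nlinarith [sq_nonneg (deriv G (τ - y) - deriv G (τ + y)), hnn τ, hnn (τ - y), hnn (τ + y)]
  have step2 : ∫ y in (0:ℝ)..η, (deriv G (τ - y) + deriv G (τ + y))
      = (∫ s in (τ - η)..τ, deriv G s) + ∫ s in τ..(τ + η), deriv G s := by
    rw [intervalIntegral.integral_add hIl hIr]
    congr 1
    · have := intervalIntegral.integral_comp_sub_left (a := (0:ℝ)) (b := η) (deriv G) τ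
      simpa using this
    · have := intervalIntegral.integral_comp_add_left (a := (0:ℝ)) (b := η) (deriv G) τ
      simpa using this
  have step3 : (∫ s in (τ - η)..τ, deriv G s) + (∫ s in τ..(τ + η), deriv G s)
      = ∫ s in (τ - η)..(τ + η), deriv G s :=
    intervalIntegral.integral_add_adjacent_intervals
      (hII _ _ (by linarith) (by linarith) (by linarith))
      (hII _ _ (by linarith) (by linarith) (by linarith))
  have step4 : (∫ s in (τ - η)..(τ + η), deriv G s) ≤ ∫ s in (T₁ - η)..(T₂ + η), deriv G s := by
    apply intervalIntegral.integral_mono_interval (by linarith) (by linarith) (by linarith)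
    · exact Eventually.of_forall fun s => hnn s
    · exact hII _ _ le_rfl le_rfl (by linarith)
  have step5 : (∫ s in (T₁ - η)..(T₂ + η), deriv G s) ≤ G (T₂ + 2 * η) - G (T₁ - η) := by
    rw [intervalIntegral.integral_of_le (by linarith), ← integral_Icc_eq_integral_Ioc]
    rw [integral_eq_lintegral_of_nonneg_ae (Eventually.of_forall fun s => hnn s)
      (measurable_deriv G).aestronglyMeasurable.restrict]
    have hb := mixAux_fatou a G hmono hderiv h1 (by linarith : T₁ - η ≤ T₂ + η) hη
    rw [show T₂ + η + η = T₂ + 2 * η by ring] at hb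
    refine ENNReal.toReal_le_of_le_ofReal ?_ hb
    have := hmono (by linarith : T₁ - η ≤ T₂ + 2 * η)
    linarith
  rw [le_div_iff₀ (by linarith : (0:ℝ) < 2 * η)]
  nlinarith [step1, step2, step3, step4, step5]


/-- Continuity at a point of a positive midpoint-log-convex locally bounded function. -/
lemma mixAux_contAt (a : ℝ) (g : ℝ → ℝ)
    (hmid : ∀ y : ℝ, 0 < y → ∀ c : ℝ, a < c - y → g c ^ 2 ≤ g (c - y) * g (c + y))
    (gpos : ∀ t, a < t → 0 < g t)
    {t₀ δ M : ℝ} (ht₀ : a < t₀) (hδ : 0 < δ) (haδ : a < t₀ - 2 * δ)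
    (hM : ∀ s : ℝ, |s - t₀| ≤ 2 * δ → g s ≤ M) : ContinuousAt g t₀ := by
  set f : ℝ → ℝ := fun t => Real.log (g t) with hf
  have hmidf : ∀ c y : ℝ, 0 < y → a < c - y → 2 * f c ≤ f (c - y) + f (c + y) := by
    intro c y hy hc
    have h1 := gpos (c - y) hc
    have h2 := gpos (c + y) (by linarith)
    have h3 := gpos c (by linarith)
    have hm := hmid y hy c hc
    have : Real.log (g c ^ 2) ≤ Real.log (g (c - y) * g (c + y)) :=
      Real.log_le_log (by positivity) hm
    rwa [Real.log_pow, Real.log_mul (ne_of_gt h1) (ne_of_gt h2)] at this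
  have hft₀M : f t₀ ≤ Real.log M := by
    have := hM t₀ (by simp; linarith)
    exact Real.log_le_log (gpos t₀ ht₀) this
  set B : ℝ := Real.log M - f t₀ with hB
  have hBnn : 0 ≤ B := by simp [hB]; linarith
  have key : ∀ n : ℕ, ∀ ε : ℝ, 0 < ε → 2 ^ n * ε ≤ 2 * δ →
      f (t₀ + ε) - f t₀ ≤ B / 2 ^ n ∧ f (t₀ - ε) - f t₀ ≤ B / 2 ^ n := by
    intro n
    induction n with
    | zero =>
      intro ε hε h2
      simp only [pow_zero, one_mul] at h2 ⊢
      constructor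
      · have := hM (t₀ + ε) (by rw [abs_of_nonneg (by linarith : (0:ℝ) ≤ t₀ + ε - t₀)]; linarith)
        have := Real.log_le_log (gpos (t₀ + ε) (by linarith)) this
        simp only [hB, div_one]; linarith [this]
      · have := hM (t₀ - ε) (by rw [abs_of_nonpos (by linarith : t₀ - ε - t₀ ≤ (0:ℝ))]; simp; linarith)
        have := Real.log_le_log (gpos (t₀ - ε) (by linarith)) this
        simp only [hB, div_one]; linarith [this]
    | succ n ih =>
      intro ε hε h2
      have h2' : 2 ^ n * (2 * ε) ≤ 2 * δ := by rw [pow_succ] at h2; linarith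
      have hεδ : 2 * ε ≤ 2 * δ := by
        have h1 : (1:ℝ) ≤ 2 ^ n := one_le_pow₀ (by norm_num : (1:ℝ) ≤ 2)
        nlinarith
      obtain ⟨ihp, ihm⟩ := ih (2 * ε) (by linarith) h2'
      constructor
      · have hA := hmidf (t₀ + ε) ε hε (by simpa using ht₀)
        rw [show t₀ + ε - ε = t₀ by ring, show t₀ + ε + ε = t₀ + 2 * ε by ring] at hA
        rw [pow_succ]
        have : B / (2 ^ n * 2) = B / 2 ^ n / 2 := by ring
        rw [this]
        linarith
      · have hA := hmidf (t₀ - ε) ε hε (by rw [show t₀ - ε - ε = t₀ - 2*ε by ring]; linarith)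
        rw [show t₀ - ε - ε = t₀ - 2 * ε by ring, show t₀ - ε + ε = t₀ by ring] at hA
        rw [pow_succ]
        have : B / (2 ^ n * 2) = B / 2 ^ n / 2 := by ring
        rw [this]
        linarith
  have keylow : ∀ ε : ℝ, 0 < ε → ε ≤ 2 * δ → f t₀ - f (t₀ - ε) ≤ f (t₀ + ε) - f t₀
      ∧ f t₀ - f (t₀ + ε) ≤ f (t₀ - ε) - f t₀ := by
    intro ε hε hεδ
    have := hmidf t₀ ε hε (by linarith)
    constructor <;> linarith
  -- continuity of f at t₀
  have hfcont : ContinuousAt f t₀ := by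
    rw [Metric.continuousAt_iff]
    intro β hβ
    obtain ⟨n, hn⟩ : ∃ n : ℕ, B < β * 2 ^ n := by
      obtain ⟨n, hn⟩ := pow_unbounded_of_one_lt (B / β) (by norm_num : (1:ℝ) < 2)
      exact ⟨n, by rw [div_lt_iff₀ hβ] at hn; linarith⟩
    refine ⟨2 * δ / 2 ^ n, by positivity, ?_⟩
    intro s hs
    rw [Real.dist_eq] at hs ⊢
    have habs : |f s - f t₀| < β := by
      rcases eq_or_ne s t₀ with rfl | hne
      · simpa using hβ
      · set ε := |s - t₀| with hε
        have hεpos : 0 < ε := abs_pos.mpr (sub_ne_zero.mpr hne)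
        have h2n : 2 ^ n * ε ≤ 2 * δ := by
          rw [lt_div_iff₀ (by positivity : (0:ℝ) < 2 ^ n)] at hs
          nlinarith [hs]
        obtain ⟨kp, km⟩ := key n ε hεpos h2n
        have hεδ' : ε ≤ 2 * δ := by
          have h1 : (1:ℝ) ≤ 2 ^ n := one_le_pow₀ (by norm_num : (1:ℝ) ≤ 2)
          nlinarith
        obtain ⟨lp, lm⟩ := keylow ε hεpos hεδ'
        have hBn : B / 2 ^ n < β := by
          rw [div_lt_iff₀ (by positivity : (0:ℝ) < 2 ^ n)]; linarith
        rw [abs_sub_lt_iff]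
        rcases abs_cases (s - t₀) with ⟨he, _⟩ | ⟨he, _⟩
        · have hseq : s = t₀ + ε := by rw [hε, he]; ring
          rw [hseq]
          constructor <;> linarith
        · have hseq : s = t₀ - ε := by rw [hε, he]; ring
          rw [hseq]
          constructor <;> linarith
    exact habs
  -- g = exp ∘ f near t₀
  have hev : g =ᶠ[𝓝 t₀] fun t => Real.exp (f t) := by
    have hIoi : Ioi a ∈ 𝓝 t₀ := Ioi_mem_nhds ht₀
    filter_upwards [hIoi] with t ht
    rw [hf]
    simp [Real.exp_log (gpos t ht)]
  rw [continuousAt_congr hev]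
  exact (Real.continuous_exp.continuousAt).comp hfcont

/-- Remark 2.2(iii): let `a ≥ 0`, `G` as in Lemma 2.2 and `V ≥ 0` a random
variable (with `V ≥ 1` a.s. when `a > 0`) such that `E(G(xV)) < ∞` for `x ≥ a`.  Then
`H x = E(G(xV))` (for `x ≥ a`, `H = 0` on `(-∞,a)`) is differentiable on `(a,∞)` with
derivative `x ↦ E(V · G'(xV) · 1_{V>0})`, which is continuous and log-convex on `(a,∞)`. -/
theorem mixture_deriv_logConvex {Ω : Type*} [MeasurableSpace Ω]
    (ℙ : Measure Ω) [IsProbabilityMeasure ℙ]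
    (a : ℝ) (ha : 0 ≤ a) (G G' : ℝ → ℝ)
    (hmono : Monotone G)
    (hrc : ∀ x : ℝ, ContinuousWithinAt G (Ici x) x)
    (hG0 : ∀ x, x < a → G x = 0)
    (hderiv : ∀ x, a < x → HasDerivAt G (G' x) x)
    (hlc : ∀ x, a < x → ∀ y ∈ Ioo (0 : ℝ) 1,
      (G' (x + y)) ^ 2 ≤ G' x * G' (x + 2 * y))
    (V : Ω → ℝ) (hV : Measurable V) (hVnn : ∀ ω, 0 ≤ V ω)
    (hV1 : 0 < a → ∀ᵐ ω ∂ℙ, 1 ≤ V ω)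
    (hint : ∀ x, a ≤ x → Integrable (fun ω => G (x * V ω)) ℙ)
    (H : ℝ → ℝ)
    (hH : ∀ x, a ≤ x → H x = ∫ ω, G (x * V ω) ∂ℙ)
    (hH0 : ∀ x, x < a → H x = 0) :
    (∀ x, a < x →
      HasDerivAt H (∫ ω, (if 0 < V ω then V ω * G' (x * V ω) else 0) ∂ℙ) x) ∧
    ContinuousOn
      (fun x : ℝ => ∫ ω, (if 0 < V ω then V ω * G' (x * V ω) else 0) ∂ℙ) (Ioi a) ∧
    ∀ x, a < x → ∀ y ∈ Ioo (0 : ℝ) 1,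
      (∫ ω, (if 0 < V ω then V ω * G' ((x + y) * V ω) else 0) ∂ℙ) ^ 2 ≤
        (∫ ω, (if 0 < V ω then V ω * G' (x * V ω) else 0) ∂ℙ) *
          ∫ ω, (if 0 < V ω then V ω * G' ((x + 2 * y) * V ω) else 0) ∂ℙ := by
  -- basic facts
  have hdiff : ∀ x, a < x → DifferentiableAt ℝ G x := fun x hx => (hderiv x hx).differentiableAt
  have hG'eq : ∀ t, a < t → G' t = deriv G t := fun t ht => ((hderiv t ht).deriv).symm
  have hnn' : ∀ t, a < t → 0 ≤ G' t := fun t ht => by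
    rw [hG'eq t ht]; exact mixAux_deriv_nonneg G hmono t
  have hmidG' : ∀ y : ℝ, 0 < y → ∀ c : ℝ, a < c - y → G' c ^ 2 ≤ G' (c - y) * G' (c + y) :=
    mixAux_mid a G' hnn' hlc
  have hmidd : ∀ y : ℝ, 0 < y → ∀ c : ℝ, a < c - y →
      deriv G c ^ 2 ≤ deriv G (c - y) * deriv G (c + y) := by
    intro y hy c hc
    rw [← hG'eq c (by linarith), ← hG'eq (c - y) hc, ← hG'eq (c + y) (by linarith)]
    exact hmidG' y hy c hc
  -- a.e. fact : positive V values push points above a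
  have hVae : ∀ᵐ ω ∂ℙ, ∀ c : ℝ, a < c → 0 < V ω → a < c * V ω := by
    rcases eq_or_lt_of_le ha with rfl | hapos
    · filter_upwards with ω c hc hv
      exact mul_pos hc hv
    · filter_upwards [hV1 hapos] with ω h1 c hc hv
      calc a < c := hc
      _ = c * 1 := by ring
      _ ≤ c * V ω := by
          apply mul_le_mul_of_nonneg_left h1 (by linarith)
  -- measurability of the integrand
  have hKmeas : ∀ x : ℝ, a < x →
      AEStronglyMeasurable (fun ω => if 0 < V ω then V ω * G' (x * V ω) else 0) ℙ := by
    intro x hx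
    have hm : Measurable (fun ω => if 0 < V ω then V ω * deriv G (x * V ω) else 0) := by
      refine Measurable.ite (measurableSet_lt measurable_const hV) ?_ measurable_const
      exact hV.mul ((measurable_deriv G).comp (hV.const_mul x))
    refine (hm.aestronglyMeasurable).congr ?_
    filter_upwards [hVae] with ω hω
    by_cases hv : 0 < V ω
    · simp only [if_pos hv]
      rw [hG'eq (x * V ω) (hω x hx hv)]
    · simp only [if_neg hv]
  -- the dominating function near a point x₀ > a
  have hdom : ∀ x₀ : ℝ, a < x₀ →
      let ε := (x₀ - a) / 4
      (Integrable (fun ω => (G ((x₀ + 3 * ε) * V ω) - G ((x₀ - 2 * ε) * V ω)) / (2 * ε)) ℙ) ∧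
      (∀ᵐ ω ∂ℙ, ∀ x ∈ Metric.ball x₀ ε,
        ‖if 0 < V ω then V ω * G' (x * V ω) else 0‖
          ≤ (G ((x₀ + 3 * ε) * V ω) - G ((x₀ - 2 * ε) * V ω)) / (2 * ε)) := by
    intro x₀ hx₀ ε
    have hε : 0 < ε := by simp only [ε]; linarith
    have hεa : a < x₀ - 2 * ε - ε := by simp only [ε]; linarith
    constructor
    · exact ((hint (x₀ + 3 * ε) (by linarith)).sub
        (hint (x₀ - 2 * ε) (by linarith))).div_const _
    · filter_upwards [hVae] with ω hω x hx
      have hbnn : 0 ≤ (G ((x₀ + 3 * ε) * V ω) - G ((x₀ - 2 * ε) * V ω)) / (2 * ε) := by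
        apply div_nonneg _ (by linarith)
        have := hmono (mul_le_mul_of_nonneg_right
          (by linarith : x₀ - 2 * ε ≤ x₀ + 3 * ε) (hVnn ω))
        linarith
      by_cases hv : 0 < V ω
      · simp only [if_pos hv]
        rw [Real.norm_eq_abs]
        have hxball : x₀ - ε < x ∧ x < x₀ + ε := by
          rw [Metric.mem_ball, Real.dist_eq, abs_sub_lt_iff] at hx
          constructor <;> linarith [hx.1, hx.2]
        have hax : a < x := by simp only [ε] at hxball ⊢; linarith [hxball.1]
        have hxa : a < x * V ω := hω x hax hv
        have habs : |V ω * G' (x * V ω)| = V ω * G' (x * V ω) := by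
          rw [abs_of_nonneg (mul_nonneg (hVnn ω) (hnn' _ hxa))]
        rw [habs, hG'eq _ hxa]
        have hpt := mixAux_ptbound a G hmono hdiff hmidd
          (η := ε * V ω) (T₁ := (x₀ - ε) * V ω) (T₂ := (x₀ + ε) * V ω) (τ := x * V ω)
          (mul_pos hε hv) ?_ ?_ ?_
        · rw [show (x₀ + ε) * V ω + 2 * (ε * V ω) = (x₀ + 3 * ε) * V ω by ring,
            show (x₀ - ε) * V ω - ε * V ω = (x₀ - 2 * ε) * V ω by ring] at hpt
          have h2 : V ω * deriv G (x * V ω)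
              ≤ V ω * ((G ((x₀ + 3 * ε) * V ω) - G ((x₀ - 2 * ε) * V ω)) / (2 * (ε * V ω))) :=
            mul_le_mul_of_nonneg_left hpt (hVnn ω)
          have h3 : V ω * ((G ((x₀ + 3 * ε) * V ω) - G ((x₀ - 2 * ε) * V ω)) / (2 * (ε * V ω)))
              = (G ((x₀ + 3 * ε) * V ω) - G ((x₀ - 2 * ε) * V ω)) / (2 * ε) := by
            field_simp
          linarith
        · rw [show (x₀ - ε) * V ω - ε * V ω = (x₀ - 2 * ε) * V ω by ring]
          exact hω (x₀ - 2 * ε) (by linarith) hv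
        · exact mul_le_mul_of_nonneg_right (by linarith [hxball.1] : x₀ - ε ≤ x) (hVnn ω)
        · exact mul_le_mul_of_nonneg_right (by linarith [hxball.2] : x ≤ x₀ + ε) (hVnn ω)
      · simp only [if_neg hv, norm_zero]
        exact hbnn
  -- main differentiation statement, including integrability
  have main : ∀ x₀ : ℝ, a < x₀ →
      Integrable (fun ω => if 0 < V ω then V ω * G' (x₀ * V ω) else 0) ℙ ∧
      HasDerivAt H (∫ ω, (if 0 < V ω then V ω * G' (x₀ * V ω) else 0) ∂ℙ) x₀ := by
    intro x₀ hx₀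
    obtain ⟨hbint, hbd⟩ := hdom x₀ hx₀
    set ε := (x₀ - a) / 4 with hεdef
    have hε : 0 < ε := by simp only [hεdef]; linarith
    have hres := hasDerivAt_integral_of_dominated_loc_of_deriv_le (μ := ℙ)
      (F := fun x ω => G (x * V ω))
      (F' := fun x ω => if 0 < V ω then V ω * G' (x * V ω) else 0)
      (x₀ := x₀) (s := Metric.ball x₀ ε) (bound := fun ω =>
        (G ((x₀ + 3 * ε) * V ω) - G ((x₀ - 2 * ε) * V ω)) / (2 * ε))
      (Metric.ball_mem_nhds x₀ hε)
      (Eventually.of_forall fun x =>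
        ((hmono.measurable.comp (hV.const_mul x)).aestronglyMeasurable))
      (hint x₀ hx₀.le)
      (hKmeas x₀ hx₀)
      hbd
      hbint
      ?_
    · obtain ⟨hintK, hderK⟩ := hres
      refine ⟨hintK, ?_⟩
      have hev : (fun x => ∫ ω, G (x * V ω) ∂ℙ) =ᶠ[𝓝 x₀] H := by
        filter_upwards [Ioi_mem_nhds hx₀] with x hx
        exact (hH x (le_of_lt hx)).symm
      exact hderK.congr_of_eventuallyEq hev.symm
    · filter_upwards [hVae] with ω hω x hx
      by_cases hv : 0 < V ω
      · simp only [if_pos hv]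
        have hxball : x₀ - ε < x ∧ x < x₀ + ε := by
          rw [Metric.mem_ball, Real.dist_eq, abs_sub_lt_iff] at hx
          constructor <;> linarith [hx.1, hx.2]
        have hax : a < x := by simp only [hεdef] at hxball ⊢; linarith [hxball.1]
        have := (hderiv (x * V ω) (hω x hax hv)).comp x (hasDerivAt_mul_const (V ω))
        simpa [mul_comm, Function.comp_def] using this
      · simp only [if_neg hv]
        have hveq : V ω = 0 := le_antisymm (not_lt.mp hv) (hVnn ω)
        have : (fun x : ℝ => G (x * V ω)) = fun _ => G 0 := by
          funext z; rw [hveq, mul_zero]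
        rw [this]
        exact hasDerivAt_const x _
  -- continuity of G' on (a, ∞)
  have hG'cont : ∀ t, a < t → ContinuousAt G' t := by
    intro t ht
    by_cases hz : ∃ s, a < s ∧ G' s = 0
    · obtain ⟨s, hs, hs0⟩ := hz
      have hzero := mixAux_zero a G' hnn' hmidG' hs hs0
      have hev : G' =ᶠ[𝓝 t] fun _ => 0 := by
        filter_upwards [Ioi_mem_nhds ht] with u hu
        exact hzero u hu
      rw [continuousAt_congr hev]
      exact continuousAt_const
    · push_neg at hz
      have gpos : ∀ s, a < s → 0 < G' s := fun s hs =>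
        lt_of_le_of_ne (hnn' s hs) (Ne.symm (hz s hs))
      set δ := (t - a) / 8 with hδdef
      have hδ : 0 < δ := by simp only [hδdef]; linarith
      apply mixAux_contAt a G' hmidG' gpos ht hδ (by simp only [hδdef]; linarith)
        (M := (G (t + 2 * δ + 2 * δ) - G (t - 2 * δ - δ)) / (2 * δ))
      intro s hsabs
      obtain ⟨hs1, hs2⟩ := abs_le.mp hsabs
      have hsa : a < s := by simp only [hδdef] at hs1 ⊢; linarith
      rw [hG'eq s hsa]
      exact mixAux_ptbound a G hmono hdiff hmidd (η := δ) (T₁ := t - 2 * δ)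
        (T₂ := t + 2 * δ) (τ := s) hδ (by simp only [hδdef]; linarith)
        (by linarith) (by linarith)
  -- continuity of the derivative integral
  have hcont : ContinuousOn
      (fun x : ℝ => ∫ ω, (if 0 < V ω then V ω * G' (x * V ω) else 0) ∂ℙ) (Ioi a) := by
    intro x₀ hx₀
    apply ContinuousAt.continuousWithinAt
    obtain ⟨hbint, hbd⟩ := hdom x₀ hx₀
    set ε := (x₀ - a) / 4 with hεdef
    have hε : 0 < ε := by simp only [hεdef]; exact by linarith [mem_Ioi.mp hx₀]
    apply continuousAt_of_dominated
      (bound := fun ω => (G ((x₀ + 3 * ε) * V ω) - G ((x₀ - 2 * ε) * V ω)) / (2 * ε))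
    · filter_upwards [Ioi_mem_nhds (mem_Ioi.mp hx₀)] with x hx
      exact hKmeas x hx
    · filter_upwards [Metric.ball_mem_nhds x₀ hε] with x hx
      filter_upwards [hbd] with ω hω
      exact hω x hx
    · exact hbint
    · filter_upwards [hVae] with ω hω
      by_cases hv : 0 < V ω
      · have heq : (fun x : ℝ => if 0 < V ω then V ω * G' (x * V ω) else 0)
            = fun x : ℝ => V ω * G' (x * V ω) := funext fun x => if_pos hv
        rw [heq]
        exact continuousAt_const.mul (ContinuousAt.comp
          (hG'cont (x₀ * V ω) (hω x₀ (mem_Ioi.mp hx₀) hv))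
          (continuous_mul_right (V ω)).continuousAt)
      · have heq : (fun x : ℝ => if 0 < V ω then V ω * G' (x * V ω) else 0)
            = fun _ : ℝ => (0:ℝ) := funext fun x => if_neg hv
        rw [heq]
        exact continuousAt_const
  refine ⟨fun x hx => (main x hx).2, hcont, ?_⟩
  -- log-convexity via Cauchy-Schwarz
  intro x hx y hy
  have hy0 : 0 < y := hy.1
  have hx1 : a < x + y := by linarith
  have hx2 : a < x + 2 * y := by linarith
  set f₀ : Ω → ℝ := fun ω => if 0 < V ω then V ω * G' (x * V ω) else 0 with hf₀
  set f₁ : Ω → ℝ := fun ω => if 0 < V ω then V ω * G' ((x + y) * V ω) else 0 with hf₁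
  set f₂ : Ω → ℝ := fun ω => if 0 < V ω then V ω * G' ((x + 2 * y) * V ω) else 0 with hf₂
  have hi₀ : Integrable f₀ ℙ := (main x hx).1
  have hi₁ : Integrable f₁ ℙ := (main (x + y) hx1).1
  have hi₂ : Integrable f₂ ℙ := (main (x + 2 * y) hx2).1
  have hnnf : ∀ (c : ℝ), a < c → ∀ᵐ ω ∂ℙ,
      0 ≤ (if 0 < V ω then V ω * G' (c * V ω) else 0) := by
    intro c hc
    filter_upwards [hVae] with ω hω
    by_cases hv : 0 < V ω
    · rw [if_pos hv]
      exact mul_nonneg (hVnn ω) (hnn' _ (hω c hc hv))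
    · rw [if_neg hv]
  have hnn₀ : 0 ≤ᵐ[ℙ] f₀ := hnnf x hx
  have hnn₁ : 0 ≤ᵐ[ℙ] f₁ := hnnf (x + y) hx1
  have hnn₂ : 0 ≤ᵐ[ℙ] f₂ := hnnf (x + 2 * y) hx2
  have hptw : ∀ᵐ ω ∂ℙ, f₁ ω ^ 2 ≤ f₀ ω * f₂ ω ∧ 0 ≤ f₀ ω ∧ 0 ≤ f₁ ω ∧ 0 ≤ f₂ ω := by
    filter_upwards [hVae, hnn₀, hnn₁, hnn₂] with ω hω h₀ h₁ h₂
    refine ⟨?_, h₀, h₁, h₂⟩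
    by_cases hv : 0 < V ω
    · simp only [hf₀, hf₁, hf₂, if_pos hv]
      have hm := hmidG' (y * V ω) (mul_pos hy0 hv) ((x + y) * V ω)
        (by rw [show (x + y) * V ω - y * V ω = x * V ω by ring]; exact hω x hx hv)
      rw [show (x + y) * V ω - y * V ω = x * V ω by ring,
        show (x + y) * V ω + y * V ω = (x + 2 * y) * V ω by ring] at hm
      nlinarith [sq_nonneg (V ω), hVnn ω]
    · simp only [hf₀, hf₁, hf₂, if_neg hv]
      simp
  -- Cauchy–Schwarz in `ℝ≥0∞`
  have hCS_pt : ∀ᵐ ω ∂ℙ, ENNReal.ofReal (f₁ ω)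
      ≤ (ENNReal.ofReal (f₀ ω)) ^ ((1:ℝ)/2) * (ENNReal.ofReal (f₂ ω)) ^ ((1:ℝ)/2) := by
    filter_upwards [hptw] with ω ⟨hsq, h₀, h₁, h₂⟩
    have hsqrt : f₁ ω ≤ Real.sqrt (f₀ ω) * Real.sqrt (f₂ ω) := by
      have h := Real.sqrt_le_sqrt hsq
      rwa [Real.sqrt_sq h₁, Real.sqrt_mul h₀] at h
    calc ENNReal.ofReal (f₁ ω) ≤ ENNReal.ofReal (Real.sqrt (f₀ ω) * Real.sqrt (f₂ ω)) :=
          ENNReal.ofReal_le_ofReal hsqrt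
      _ = ENNReal.ofReal (Real.sqrt (f₀ ω)) * ENNReal.ofReal (Real.sqrt (f₂ ω)) :=
          ENNReal.ofReal_mul (Real.sqrt_nonneg _)
      _ = (ENNReal.ofReal (f₀ ω)) ^ ((1:ℝ)/2) * (ENNReal.ofReal (f₂ ω)) ^ ((1:ℝ)/2) := by
          rw [Real.sqrt_eq_rpow, Real.sqrt_eq_rpow,
            ENNReal.ofReal_rpow_of_nonneg h₀ (by norm_num),
            ENNReal.ofReal_rpow_of_nonneg h₂ (by norm_num)]
  have hconj : Real.HolderConjugate 2 2 := Real.HolderConjugate.two_two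
  have hmeas0 : AEMeasurable (fun ω => (ENNReal.ofReal (f₀ ω)) ^ ((1:ℝ)/2)) ℙ :=
    (ENNReal.continuous_rpow_const.measurable.comp_aemeasurable
      ((hKmeas x hx).aemeasurable.ennreal_ofReal))
  have hmeas2 : AEMeasurable (fun ω => (ENNReal.ofReal (f₂ ω)) ^ ((1:ℝ)/2)) ℙ :=
    (ENNReal.continuous_rpow_const.measurable.comp_aemeasurable
      ((hKmeas (x + 2 * y) hx2).aemeasurable.ennreal_ofReal))
  have hhalf : ∀ z : ENNReal, (z ^ ((1:ℝ)/2)) ^ (2:ℝ) = z := by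
    intro z
    rw [← ENNReal.rpow_mul]
    norm_num
  have hCS : ∫⁻ ω, ENNReal.ofReal (f₁ ω) ∂ℙ
      ≤ (∫⁻ ω, ENNReal.ofReal (f₀ ω) ∂ℙ) ^ ((1:ℝ)/2)
        * (∫⁻ ω, ENNReal.ofReal (f₂ ω) ∂ℙ) ^ ((1:ℝ)/2) := by
    calc ∫⁻ ω, ENNReal.ofReal (f₁ ω) ∂ℙ
        ≤ ∫⁻ ω, (ENNReal.ofReal (f₀ ω)) ^ ((1:ℝ)/2) * (ENNReal.ofReal (f₂ ω)) ^ ((1:ℝ)/2) ∂ℙ :=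
          lintegral_mono_ae hCS_pt
      _ ≤ (∫⁻ ω, ((ENNReal.ofReal (f₀ ω)) ^ ((1:ℝ)/2)) ^ (2:ℝ) ∂ℙ) ^ ((1:ℝ)/2)
          * (∫⁻ ω, ((ENNReal.ofReal (f₂ ω)) ^ ((1:ℝ)/2)) ^ (2:ℝ) ∂ℙ) ^ ((1:ℝ)/2) :=
          ENNReal.lintegral_mul_le_Lp_mul_Lq ℙ hconj hmeas0 hmeas2
      _ = (∫⁻ ω, ENNReal.ofReal (f₀ ω) ∂ℙ) ^ ((1:ℝ)/2)
          * (∫⁻ ω, ENNReal.ofReal (f₂ ω) ∂ℙ) ^ ((1:ℝ)/2) := by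
          simp only [hhalf]
  rw [← ofReal_integral_eq_lintegral_ofReal hi₀ hnn₀,
    ← ofReal_integral_eq_lintegral_ofReal hi₁ hnn₁,
    ← ofReal_integral_eq_lintegral_ofReal hi₂ hnn₂] at hCS
  have h₀nn : 0 ≤ ∫ ω, f₀ ω ∂ℙ := integral_nonneg_of_ae hnn₀
  have h₁nn : 0 ≤ ∫ ω, f₁ ω ∂ℙ := integral_nonneg_of_ae hnn₁
  have h₂nn : 0 ≤ ∫ ω, f₂ ω ∂ℙ := integral_nonneg_of_ae hnn₂
  have hsq : ENNReal.ofReal ((∫ ω, f₁ ω ∂ℙ) * (∫ ω, f₁ ω ∂ℙ))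
      ≤ ENNReal.ofReal ((∫ ω, f₀ ω ∂ℙ) * (∫ ω, f₂ ω ∂ℙ)) := by
    rw [ENNReal.ofReal_mul h₁nn, ENNReal.ofReal_mul h₀nn]
    calc ENNReal.ofReal (∫ ω, f₁ ω ∂ℙ) * ENNReal.ofReal (∫ ω, f₁ ω ∂ℙ)
        ≤ ((ENNReal.ofReal (∫ ω, f₀ ω ∂ℙ)) ^ ((1:ℝ)/2)
            * (ENNReal.ofReal (∫ ω, f₂ ω ∂ℙ)) ^ ((1:ℝ)/2))
          * ((ENNReal.ofReal (∫ ω, f₀ ω ∂ℙ)) ^ ((1:ℝ)/2)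
            * (ENNReal.ofReal (∫ ω, f₂ ω ∂ℙ)) ^ ((1:ℝ)/2)) := mul_le_mul' hCS hCS
      _ = ((ENNReal.ofReal (∫ ω, f₀ ω ∂ℙ)) ^ ((1:ℝ)/2)
            * (ENNReal.ofReal (∫ ω, f₀ ω ∂ℙ)) ^ ((1:ℝ)/2))
          * ((ENNReal.ofReal (∫ ω, f₂ ω ∂ℙ)) ^ ((1:ℝ)/2)
            * (ENNReal.ofReal (∫ ω, f₂ ω ∂ℙ)) ^ ((1:ℝ)/2)) := by ring
      _ = ENNReal.ofReal (∫ ω, f₀ ω ∂ℙ) * ENNReal.ofReal (∫ ω, f₂ ω ∂ℙ) := by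
          rw [← ENNReal.rpow_add_of_nonneg _ _ (by norm_num) (by norm_num),
            ← ENNReal.rpow_add_of_nonneg _ _ (by norm_num) (by norm_num)]
          norm_num
  have := (ENNReal.ofReal_le_ofReal_iff (mul_nonneg h₀nn h₂nn)).mp hsq
  calc (∫ ω, f₁ ω ∂ℙ) ^ 2 = (∫ ω, f₁ ω ∂ℙ) * (∫ ω, f₁ ω ∂ℙ) := sq _
    _ ≤ (∫ ω, f₀ ω ∂ℙ) * ∫ ω, f₂ ω ∂ℙ := this
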